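/- For any density matrix ρ on ℂ^d, the minimum of the quantum relative entropy D(ρ‖σ) = tr ρ(log ρ − log σ) over all diagonal density matrices σ with full support on the support of Δ(ρ) is attained at σ = Δ(ρ) and equals S(Δ(ρ)) − S(ρ), where S is the von Neumann entropy. -/

import Mathlib

open Matrix Complex
open scoped ComplexOrder

open Classical in
/-- Matrix logarithm of a Hermitian matrix, via its spectral decomposition
(junk value `0` on non-Hermitian matrices). -/
noncomputable def matLog {d : ℕ} (A : Matrix (Fin d) (Fin d) ℂ) :
    Matrix (Fin d) (Fin d) ℂ :=
  if hA : A.IsHermitian then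
    (hA.eigenvectorUnitary : Matrix (Fin d) (Fin d) ℂ) *
      Matrix.diagonal (fun i => (Real.log (hA.eigenvalues i) : ℂ)) *
      (star (hA.eigenvectorUnitary : Matrix (Fin d) (Fin d) ℂ))
  else 0

/-- Von Neumann entropy `S(τ) = −tr(τ log τ)`. -/
noncomputable def vnEntropy {d : ℕ} (A : Matrix (Fin d) (Fin d) ℂ) : ℝ :=
  -(A * matLog A).trace.re

/-- Quantum relative entropy `D(ρ‖σ) = tr ρ (log ρ − log σ)`. -/
noncomputable def relEnt {d : ℕ} (A B : Matrix (Fin d) (Fin d) ℂ) : ℝ :=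
  (A * (matLog A - matLog B)).trace.re

lemma matLog_diagonal {d : ℕ} (q : Fin d → ℝ) :
    matLog (Matrix.diagonal (fun j => (q j : ℂ))) =
      Matrix.diagonal (fun j => (Real.log (q j) : ℂ)) := by
  have hA : (Matrix.diagonal (fun j => (q j : ℂ))).IsHermitian :=
    Matrix.isHermitian_diagonal_of_self_adjoint _ (by
      funext j; simp [Pi.star_apply, Complex.star_def, Complex.conj_ofReal])
  rw [matLog, dif_pos hA]
  set U : Matrix (Fin d) (Fin d) ℂ := (hA.eigenvectorUnitary : Matrix (Fin d) (Fin d) ℂ) with hU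
  have hUU : U * star U = 1 := (Matrix.mem_unitaryGroup_iff).mp hA.eigenvectorUnitary.2
  have hsUU : star U * U = 1 := (Matrix.mem_unitaryGroup_iff').mp hA.eigenvectorUnitary.2
  have h1 : Matrix.diagonal (fun j => (q j : ℂ)) * U
      = U * Matrix.diagonal (RCLike.ofReal ∘ hA.eigenvalues) := by
    conv_lhs => rw [hA.spectral_theorem]
    rw [Unitary.conjStarAlgAut_apply, ← hU, mul_assoc, mul_assoc, hsUU, mul_one]
  have key : ∀ i j, U i j ≠ 0 → Real.log (hA.eigenvalues j) = Real.log (q i) := by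
    intro i j hne
    have h2 := congrFun (congrFun h1 i) j
    rw [Matrix.diagonal_mul, Matrix.mul_diagonal] at h2
    rw [mul_comm (U i j)] at h2
    have h3 : (q i : ℂ) = (hA.eigenvalues j : ℂ) := by
      simpa using mul_right_cancel₀ hne h2
    rw [Complex.ofReal_inj.mp h3.symm]
  ext i k
  have entry : (U * Matrix.diagonal (fun i => (Real.log (hA.eigenvalues i) : ℂ)) * star U) i k
      = ∑ j, U i j * (Real.log (hA.eigenvalues j) : ℂ) * star (U k j) := by
    rw [Matrix.mul_apply]
    refine Finset.sum_congr rfl fun j _ => ?_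
    rw [Matrix.mul_diagonal, Matrix.star_apply]
  rw [entry]
  have step : ∀ j, U i j * (Real.log (hA.eigenvalues j) : ℂ) * star (U k j)
      = (Real.log (q i) : ℂ) * (U i j * star (U k j)) := by
    intro j
    by_cases h : U i j = 0
    · simp [h]
    · rw [key i j h]; ring
  rw [Finset.sum_congr rfl (fun j _ => step j), ← Finset.mul_sum]
  have horth : ∑ j, U i j * star (U k j) = (1 : Matrix (Fin d) (Fin d) ℂ) i k := by
    rw [← hUU, Matrix.mul_apply]
    refine Finset.sum_congr rfl fun j _ => ?_
    rw [Matrix.star_apply]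
  rw [horth]
  by_cases h : i = k <;> simp [Matrix.one_apply, Matrix.diagonal_apply, h]

lemma gibbs {d : ℕ} (p q : Fin d → ℝ) (hp : ∀ j, 0 ≤ p j) (hq : ∀ j, 0 ≤ q j)
    (hps : ∑ j, p j = 1) (hqs : ∑ j, q j = 1)
    (hsupp : ∀ j, p j ≠ 0 → q j ≠ 0) :
    ∑ j, p j * Real.log (q j) ≤ ∑ j, p j * Real.log (p j) := by
  have key : ∀ j, p j * Real.log (q j) - p j * Real.log (p j) ≤ q j - p j := by
    intro j
    by_cases hpj : p j = 0
    · simp [hpj, hq j]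
    · have hp' : 0 < p j := lt_of_le_of_ne (hp j) (Ne.symm hpj)
      have hq' : 0 < q j := lt_of_le_of_ne (hq j) (Ne.symm (hsupp j hpj))
      have hlog : Real.log (q j) - Real.log (p j) ≤ q j / p j - 1 := by
        rw [← Real.log_div (ne_of_gt hq') (ne_of_gt hp')]
        exact Real.log_le_sub_one_of_pos (div_pos hq' hp')
      calc p j * Real.log (q j) - p j * Real.log (p j)
          = p j * (Real.log (q j) - Real.log (p j)) := by ring
        _ ≤ p j * (q j / p j - 1) := by
            exact mul_le_mul_of_nonneg_left hlog (hp j)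
        _ = q j - p j := by field_simp
  have := Finset.sum_le_sum (fun j (_ : j ∈ Finset.univ) => key j)
  simp only [Finset.sum_sub_distrib] at this
  rw [hps, hqs] at this
  linarith

lemma relEnt_diag {d : ℕ} (ρ : Matrix (Fin d) (Fin d) ℂ) (q : Fin d → ℝ) :
    relEnt ρ (Matrix.diagonal (fun j => (q j : ℂ)))
      = -vnEntropy ρ - ∑ j, (ρ j j).re * Real.log (q j) := by
  rw [relEnt, matLog_diagonal, mul_sub, Matrix.trace_sub, Complex.sub_re, vnEntropy]
  have : (ρ * Matrix.diagonal fun j => (Real.log (q j) : ℂ)).trace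
      = ∑ j, ρ j j * (Real.log (q j) : ℂ) := by
    rw [Matrix.trace]
    refine Finset.sum_congr rfl fun j _ => ?_
    rw [Matrix.diag_apply, Matrix.mul_diagonal]
  rw [this, Complex.re_sum]
  have : ∀ j, (ρ j j * (Real.log (q j) : ℂ)).re = (ρ j j).re * Real.log (q j) := by
    intro j; simp [Complex.mul_re]
  rw [Finset.sum_congr rfl fun j _ => this j]
  ring

/-- The minimum of `D(ρ‖σ)` over diagonal density matrices `σ` whose support
contains the support of `Δ(ρ)` is attained at `σ = Δ(ρ)` and equals
`S(Δ(ρ)) − S(ρ)`. -/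
theorem relEnt_min_diagonal {d : ℕ} (ρ : Matrix (Fin d) (Fin d) ℂ)
    (hρ : ρ.PosSemidef) (htr : ρ.trace = 1) :
    IsLeast {x : ℝ | ∃ q : Fin d → ℝ, (∀ j, 0 ≤ q j) ∧ (∑ j, q j) = 1 ∧
        (∀ j, ρ j j ≠ 0 → q j ≠ 0) ∧
        x = relEnt ρ (Matrix.diagonal (fun j => (q j : ℂ)))}
      (vnEntropy (Matrix.diagonal (fun j => ρ j j)) - vnEntropy ρ) := by
  set p : Fin d → ℝ := fun j => (ρ j j).re with hp
  have hdiag : ∀ j, ρ j j = ((p j : ℝ) : ℂ) := by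
    intro j
    have h := congrFun (congrFun hρ.1 j) j
    rw [Matrix.conjTranspose_apply] at h
    exact (Complex.conj_eq_iff_re.mp h).symm
  have hp0 : ∀ j, 0 ≤ p j := by
    intro j
    have h2 : (0 : ℂ) ≤ ρ j j := hρ.diag_nonneg
    exact (Complex.nonneg_iff.mp h2).1
  have hps : ∑ j, p j = 1 := by
    have : (ρ.trace).re = 1 := by rw [htr]; simp
    rw [Matrix.trace] at this
    rw [← this, Complex.re_sum]
    rfl
  have hΔ : vnEntropy (Matrix.diagonal (fun j => ρ j j)) = -∑ j, p j * Real.log (p j) := by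
    have hrw : (Matrix.diagonal (fun j => ρ j j)) = Matrix.diagonal (fun j => ((p j : ℝ) : ℂ)) := by
      ext j k
      by_cases h : j = k <;> simp [Matrix.diagonal_apply, h, hdiag]
    rw [hrw, vnEntropy, matLog_diagonal, Matrix.diagonal_mul_diagonal, Matrix.trace_diagonal]
    rw [Complex.re_sum]
    congr 1
    refine Finset.sum_congr rfl fun j _ => ?_
    simp [Complex.mul_re]
  constructor
  · refine ⟨p, hp0, hps, ?_, ?_⟩
    · intro j hne hpj
      exact hne (by rw [hdiag j, hpj]; simp)
    · rw [relEnt_diag, hΔ]; ring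
  · rintro x ⟨q, hq0, hqs, hsupp, rfl⟩
    rw [relEnt_diag, hΔ]
    have hsupp' : ∀ j, p j ≠ 0 → q j ≠ 0 := by
      intro j hpj
      apply hsupp
      intro h0
      exact hpj (by rw [hp]; simp [h0])
    have := gibbs p q hp0 hq0 hps hqs hsupp'
    linarith
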